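/- For every σ > 0 there exists a constant C > 0 such that for all complex numbers z₁, z₂: ||z₁+z₂|^{2σ}(z₁+z₂) - |z₁|^{2σ}z₁ - |z₂|^{2σ}z₂| ≤ C(|z₁|^{2σ}|z₂| + |z₂|^{2σ}|z₁|). -/

import Mathlib

private lemma aux1 (p : ℝ) (hp : 0 < p) {t : ℝ} (ht0 : 0 ≤ t) (ht1 : t ≤ 1) :
    1 - t ^ p ≤ max 1 p * (1 - t) := by
  rcases le_or_gt p 1 with h | h
  · rcases eq_or_lt_of_le ht0 with h0 | h0
    · rw [← h0, Real.zero_rpow hp.ne']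
      nlinarith [le_max_left (1:ℝ) p]
    · have ht : t ^ (1:ℝ) ≤ t ^ p := Real.rpow_le_rpow_of_exponent_ge h0 ht1 h
      rw [Real.rpow_one] at ht
      nlinarith [le_max_left (1:ℝ) p]
  · have hb := one_add_mul_self_le_rpow_one_add (s := t - 1) (by linarith) h.le
    simp only [add_sub_cancel] at hb
    nlinarith [le_max_right (1:ℝ) p]

private lemma aux2 (p : ℝ) (hp : 0 < p) {a b : ℝ} (hb : 0 ≤ b) (hba : b ≤ a) :
    (a ^ p - b ^ p) * b ≤ max 1 p * (a ^ p * (a - b)) := by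
  rcases eq_or_lt_of_le (hb.trans hba) with ha | ha
  · have hb0 : b = 0 := le_antisymm (hba.trans ha.symm.le) hb
    simp [← ha, hb0]
  · set t := b / a with hta
    have ht0 : 0 ≤ t := div_nonneg hb ha.le
    have ht1 : t ≤ 1 := (div_le_one ha).mpr hba
    have key := aux1 p hp ht0 ht1
    have hbp : b ^ p = a ^ p * t ^ p := by
      rw [← Real.mul_rpow ha.le ht0, mul_div_cancel₀ _ ha.ne']
    have hap : (0:ℝ) ≤ a ^ p := Real.rpow_nonneg ha.le p
    have h1 : (1 - t) * a = a - b := by rw [hta]; field_simp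
    have hmax : (0:ℝ) ≤ max 1 p := le_trans zero_le_one (le_max_left _ _)
    have k2 : a ^ p - b ^ p ≤ max 1 p * (a ^ p * (1 - t)) := by
      have := mul_le_mul_of_nonneg_left key hap
      rw [hbp]; nlinarith
    calc (a ^ p - b ^ p) * b ≤ (max 1 p * (a ^ p * (1 - t))) * b :=
          mul_le_mul_of_nonneg_right k2 hb
      _ = max 1 p * a ^ p * ((1 - t) * b) := by ring
      _ ≤ max 1 p * a ^ p * ((1 - t) * a) := by
          have h1t : 0 ≤ 1 - t := by linarith
          have hma : 0 ≤ max 1 p * a ^ p := mul_nonneg hmax hap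
          nlinarith [mul_nonneg (mul_nonneg hma h1t) (by linarith : (0:ℝ) ≤ a - b)]
      _ = max 1 p * (a ^ p * (a - b)) := by rw [h1]; ring

private lemma gdiff_aux (p : ℝ) (hp : 0 < p) (u v : ℂ) (hvu : ‖v‖ ≤ ‖u‖) :
    ‖(‖u‖ ^ p : ℝ) * u - (‖v‖ ^ p : ℝ) * v‖
      ≤ (1 + max 1 p) * ((‖u‖ ^ p) * ‖u - v‖) := by
  set A := ‖u‖ ^ p with hA
  set B := ‖v‖ ^ p with hB
  have hA0 : 0 ≤ A := Real.rpow_nonneg (norm_nonneg u) p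
  have hB0 : 0 ≤ B := Real.rpow_nonneg (norm_nonneg v) p
  have hBA : B ≤ A := Real.rpow_le_rpow (norm_nonneg v) hvu hp.le
  have hsplit : ((A:ℂ) * u - (B:ℂ) * v) = (A:ℂ) * (u - v) + ((A - B : ℝ) : ℂ) * v := by
    push_cast; ring
  have habs : ‖u‖ - ‖v‖ ≤ ‖u - v‖ := by
    have := abs_norm_sub_norm_le u v
    exact le_trans (le_abs_self _) this
  have key : (A - B) * ‖v‖ ≤ max 1 p * (A * (‖u‖ - ‖v‖)) := by
    rw [hA, hB]
    exact aux2 p hp (norm_nonneg v) hvu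
  calc ‖(A:ℂ) * u - (B:ℂ) * v‖
      ≤ ‖(A:ℂ) * (u - v)‖ + ‖((A - B : ℝ) : ℂ) * v‖ := by
        rw [hsplit]; exact norm_add_le _ _
    _ = A * ‖u - v‖ + (A - B) * ‖v‖ := by
        rw [norm_mul, norm_mul, Complex.norm_real, Complex.norm_real, Real.norm_eq_abs,
          Real.norm_eq_abs, abs_of_nonneg hA0, abs_of_nonneg (by linarith : (0:ℝ) ≤ A - B)]
    _ ≤ A * ‖u - v‖ + max 1 p * (A * (‖u‖ - ‖v‖)) := by
        linarith
    _ ≤ A * ‖u - v‖ + max 1 p * (A * ‖u - v‖) := by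
        have hmax : (0:ℝ) ≤ max 1 p := le_trans zero_le_one (le_max_left _ _)
        gcongr
    _ = (1 + max 1 p) * (A * ‖u - v‖) := by ring

private lemma main_aux (p : ℝ) (hp : 0 < p) (z₁ z₂ : ℂ) (h : ‖z₂‖ ≤ ‖z₁‖) :
    ‖(‖z₁ + z₂‖ ^ p : ℝ) * (z₁ + z₂)
          - (‖z₁‖ ^ p : ℝ) * z₁ - (‖z₂‖ ^ p : ℝ) * z₂‖
      ≤ ((1 + max 1 p) * (2 ^ p + 1) + 1) * (‖z₁‖ ^ p * ‖z₂‖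
          + ‖z₂‖ ^ p * ‖z₁‖) := by
  set a := ‖z₁‖ with ha
  set b := ‖z₂‖ with hb
  have ha0 : 0 ≤ a := norm_nonneg z₁
  have hb0 : 0 ≤ b := norm_nonneg z₂
  set Cg := 1 + max 1 p with hCg
  have hCg0 : (0:ℝ) ≤ Cg := by
    have : (0:ℝ) ≤ max 1 p := le_trans zero_le_one (le_max_left _ _)
    linarith
  have hsum : ‖z₁ + z₂‖ ^ p ≤ 2 ^ p * a ^ p := by
    have h1 : ‖z₁ + z₂‖ ≤ 2 * a := by
      have := norm_add_le z₁ z₂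
      rw [← ha, ← hb] at this; linarith
    calc ‖z₁ + z₂‖ ^ p ≤ (2 * a) ^ p :=
          Real.rpow_le_rpow (norm_nonneg _) h1 hp.le
      _ = 2 ^ p * a ^ p := Real.mul_rpow (by norm_num) ha0
  have t1 : ‖(‖z₁ + z₂‖ ^ p : ℝ) * (z₁ + z₂)
      - (‖z₁‖ ^ p : ℝ) * z₁‖ ≤ Cg * ((2 ^ p * a ^ p + a ^ p) * b) := by
    have habs1 : ‖z₁‖ ≤ ‖z₁ + z₂‖ ∨ True := Or.inr trivial
    rcases le_total (‖z₁‖) (‖z₁ + z₂‖) with hle | hle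
    · have := gdiff_aux p hp (z₁ + z₂) z₁ hle
      rw [add_sub_cancel_left] at this
      refine this.trans ?_
      have hb' : 0 ≤ ‖z₂‖ := hb0
      calc Cg * (‖z₁ + z₂‖ ^ p * b) ≤ Cg * ((2 ^ p * a ^ p) * b) := by
            gcongr
        _ ≤ Cg * ((2 ^ p * a ^ p + a ^ p) * b) := by
            have : (0:ℝ) ≤ a ^ p := Real.rpow_nonneg ha0 p
            gcongr <;> nlinarith
    · have := gdiff_aux p hp z₁ (z₁ + z₂) hle
      rw [show z₁ - (z₁ + z₂) = -z₂ by ring, norm_neg,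
        norm_sub_rev] at this
      refine this.trans ?_
      have hap : (0:ℝ) ≤ a ^ p := Real.rpow_nonneg ha0 p
      have h2p : (0:ℝ) ≤ 2 ^ p := Real.rpow_nonneg (by norm_num) p
      have : a ^ p ≤ 2 ^ p * a ^ p + a ^ p := by nlinarith
      gcongr
  have t2 : ‖(‖z₂‖ ^ p : ℝ) * z₂‖ ≤ b ^ p * a := by
    rw [norm_mul, Complex.norm_real, Real.norm_eq_abs, abs_of_nonneg (Real.rpow_nonneg hb0 p)]
    have : ‖z₂‖ ≤ a := h
    gcongr

  have tri : ‖(‖z₁ + z₂‖ ^ p : ℝ) * (z₁ + z₂)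
        - (‖z₁‖ ^ p : ℝ) * z₁ - (‖z₂‖ ^ p : ℝ) * z₂‖
      ≤ ‖(‖z₁ + z₂‖ ^ p : ℝ) * (z₁ + z₂)
        - (‖z₁‖ ^ p : ℝ) * z₁‖ + ‖(‖z₂‖ ^ p : ℝ) * z₂‖ := by
    exact norm_sub_le _ _
  have hapb : (0:ℝ) ≤ a ^ p * b := mul_nonneg (Real.rpow_nonneg ha0 p) hb0
  have hbpa : (0:ℝ) ≤ b ^ p * a := mul_nonneg (Real.rpow_nonneg hb0 p) ha0
  have h2p : (0:ℝ) ≤ 2 ^ p := Real.rpow_nonneg (by norm_num) p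
  nlinarith [tri, t1, t2, mul_nonneg hCg0 hapb, mul_nonneg (mul_nonneg hCg0 h2p) hapb,
    mul_nonneg hCg0 hbpa, mul_nonneg (mul_nonneg hCg0 h2p) hbpa]

/-- For every `σ > 0` there exists `C > 0` such that for all `z₁ z₂ : ℂ`,
`| g(z₁+z₂) - g(z₁) - g(z₂) | ≤ C (|z₁|^{2σ}|z₂| + |z₂|^{2σ}|z₁|)`,
where `g(z) = |z|^{2σ} z`. -/
theorem nonlinearity_superposition_estimate (σ : ℝ) (hσ : 0 < σ) :
    ∃ C > 0, ∀ z₁ z₂ : ℂ,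
      ‖(‖z₁ + z₂‖ ^ (2 * σ) : ℝ) * (z₁ + z₂)
          - (‖z₁‖ ^ (2 * σ) : ℝ) * z₁
          - (‖z₂‖ ^ (2 * σ) : ℝ) * z₂‖
        ≤ C * (‖z₁‖ ^ (2 * σ) * ‖z₂‖
          + ‖z₂‖ ^ (2 * σ) * ‖z₁‖) := by
  set p := 2 * σ with hpdef
  have hp : 0 < p := by positivity
  refine ⟨(1 + max 1 p) * (2 ^ p + 1) + 1, by positivity, fun z₁ z₂ => ?_⟩
  rcases le_total (‖z₂‖) (‖z₁‖) with h | h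
  · exact main_aux p hp z₁ z₂ h
  · have := main_aux p hp z₂ z₁ h
    have heq : ((‖z₂ + z₁‖ ^ p : ℝ) * (z₂ + z₁)
        - (‖z₂‖ ^ p : ℝ) * z₂ - (‖z₁‖ ^ p : ℝ) * z₁)
        = ((‖z₁ + z₂‖ ^ p : ℝ) * (z₁ + z₂)
        - (‖z₁‖ ^ p : ℝ) * z₁ - (‖z₂‖ ^ p : ℝ) * z₂) := by
      rw [add_comm z₂ z₁]; ring
    rw [heq] at this
    linarith
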